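/- Let G be a countable group, A a finite set with at least two elements, and X ⊆ A^G a subshift such that for every a ∈ A there exists x ∈ X with x(1_G) = a. Then there exist a continuous action α of G on the Cantor space 𝒞 and a continuous map c : 𝒞 → A such that the map Q : 𝒞 → A^G defined by Q(z)(g) = c(α(g⁻¹)(z)) is equivariant between α and the shift action and has image exactly X. -/

import Mathlib

open Topology

/-- The Cantor space `𝒞`. -/
abbrev Cantor : Type := ℕ → Bool

/-- `α : G → C(𝒞,𝒞)` is a continuous action if it is a homomorphism into the
self-homeomorphisms of `𝒞` (recorded as continuous maps; continuity of the inverse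
`α g⁻¹` is automatic from the homomorphism equations). -/
def IsAction (G : Type) [Group G] (α : G → C(Cantor, Cantor)) : Prop :=
  α 1 = ContinuousMap.id Cantor ∧ ∀ g h : G, α (g * h) = (α g).comp (α h)

/-- The space `Act_G(𝒞)` of continuous actions of `G` on the Cantor space,
topologized as a subspace of `C(𝒞,𝒞)^G` (compact-open topology on each factor). -/
abbrev ActSpace (G : Type) [Group G] : Type :=
  {α : G → C(Cantor, Cantor) // IsAction G α}

/-- The conjugacy class of an action `α` under the conjugation action of `Homeo(𝒞)`. -/
def conjClass {G : Type} [Group G] (α : ActSpace G) : Set (ActSpace G) :=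
  {β | ∃ φ : Cantor ≃ₜ Cantor, ∀ g : G,
    (β.1 g : Cantor → Cantor) = φ ∘ (α.1 g : Cantor → Cantor) ∘ φ.symm}

/-- The strong topological Rokhlin property: some action on the Cantor space has a
comeager conjugacy class. -/
def HasSTRP (G : Type) [Group G] : Prop :=
  ∃ α : ActSpace G, conjClass α ∈ residual (ActSpace G)

/-- The shift action of `G` on `A^G`: `(g • x)(h) = x(g⁻¹h)`. -/
def shift {G : Type} [Group G] {A : Type} (g : G) (x : G → A) : G → A :=
  fun h => x (g⁻¹ * h)

/-- A subshift: closed (in the product of discrete topologies) and shift-invariant. -/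
def IsSubshift (G : Type) [Group G] (A : Type) (X : Set (G → A)) : Prop :=
  (letI : TopologicalSpace A := ⊥; IsClosed X) ∧ ∀ g : G, ∀ x ∈ X, shift g x ∈ X

/-- The set `X_F` of `F`-patterns of `X`. -/
def patterns {G A : Type} (F : Finset G) (X : Set (G → A)) : Set (F → A) :=
  (fun (x : G → A) (f : F) => x (f : G)) '' X

/-- Subshift of finite type, with defining window `E` and allowed patterns `𝔽`. -/
def IsSFT (G : Type) [Group G] (A : Type) (X : Set (G → A)) : Prop :=
  ∃ (E : Finset G) (𝔽 : Set (E → A)),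
    ∀ x : G → A, x ∈ X ↔ ∀ g : G, (fun e : E => shift g x (e : G)) ∈ 𝔽

/-- Continuity on a set, for a map between full shift spaces over discrete alphabets. -/
def ContinuousOnD {G A B : Type} (ψ : (G → B) → (G → A)) (Z : Set (G → B)) : Prop :=
  letI : TopologicalSpace A := ⊥
  letI : TopologicalSpace B := ⊥
  ContinuousOn ψ Z

/-- `G`-equivariance of a map between shift spaces, on a set. -/
def EquivariantOn {G A B : Type} [Group G] (ψ : (G → B) → (G → A)) (Z : Set (G → B)) : Prop :=
  ∀ g : G, ∀ z ∈ Z, ψ (shift g z) = shift g (ψ z)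

/-- A sofic subshift: a continuous `G`-equivariant image of a subshift of finite type. -/
def IsSofic (G : Type) [Group G] (A : Type) (X : Set (G → A)) : Prop :=
  ∃ (B : Type) (_ : Fintype B) (_ : Nontrivial B) (Z : Set (G → B))
    (ψ : (G → B) → (G → A)),
    IsSubshift G B Z ∧ IsSFT G B Z ∧ ContinuousOnD ψ Z ∧ EquivariantOn ψ Z ∧ ψ '' Z = X

/-- The sliding block code `Φ(y)(g) = f(d ↦ y(g·d))` induced by `f : (D → B) → A`. -/
def slidingBlock {G : Type} [Group G] {A B : Type} (D : Finset G)
    (f : (D → B) → A) : (G → B) → (G → A) :=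
  fun y g => f (fun d => y (g * (d : G)))

/-- A projectively isolated subshift. -/
def ProjIsolated (G : Type) [Group G] (A : Type) (X : Set (G → A)) : Prop :=
  ∃ (B : Type) (_ : Fintype B) (_ : Nontrivial B) (Y : Set (G → B))
    (F D : Finset G) (f : (D → B) → A),
    IsSubshift G B Y ∧
    slidingBlock D f '' Y = X ∧
    ∀ Z : Set (G → B), IsSubshift G B Z → patterns F Z = patterns F Y →
      slidingBlock D f '' Z = X

/-- An isolated subshift: an SFT `X` such that for some finite `F ⊆ G` no proper
subshift has the same `F`-patterns as `X`. -/
def IsIsolated (G : Type) [Group G] (A : Type) (X : Set (G → A)) : Prop :=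
  IsSFT G A X ∧ ∃ F : Finset G, ∀ Y : Set (G → A),
    IsSubshift G A Y → Y ⊂ X → patterns F Y ≠ patterns F X

/-- A strongly projectively isolated subshift: a continuous `G`-equivariant image of an
isolated subshift. -/
def StronglyProjIsolated (G : Type) [Group G] (A : Type) (X : Set (G → A)) : Prop :=
  ∃ (B : Type) (_ : Fintype B) (_ : Nontrivial B) (Y : Set (G → B))
    (ψ : (G → B) → (G → A)),
    IsSubshift G B Y ∧ IsIsolated G B Y ∧
    ContinuousOnD ψ Y ∧ EquivariantOn ψ Y ∧ ψ '' Y = X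

/-- Shadowing (the pseudo-orbit tracing property) of an action `act` of `G`,
with respect to a distance function `d`. -/
def HasShadowing {G X : Type} [Group G] (d : X → X → ℝ) (act : G → X → X) : Prop :=
  ∀ ε : ℝ, 0 < ε → ∃ (δ : ℝ) (S : Finset G), 0 < δ ∧
    ∀ x : G → X, (∀ g : G, ∀ s ∈ S, d (act s (x g)) (x (s * g)) < δ) →
      ∃ y : X, ∀ g : G, d (x g) (act g y) < ε

/-- A finite partition of the whole space into nonempty clopen sets. -/
def IsClopenPartition {X : Type} [TopologicalSpace X] (parts : Finset (Set X)) : Prop :=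
  (∀ P ∈ parts, IsClopen P ∧ P.Nonempty) ∧
  (∀ P ∈ parts, ∀ Q ∈ parts, P ≠ Q → Disjoint P Q) ∧
  (⋃ P ∈ parts, P) = Set.univ

/-- A finite partition of a subshift `X` into nonempty subsets that are clopen in `X`. -/
def IsClopenPartitionIn {G A : Type} (X : Set (G → A)) (parts : Finset (Set (G → A))) : Prop :=
  (letI : TopologicalSpace A := ⊥;
    ∀ P ∈ parts, P.Nonempty ∧ P ⊆ X ∧ IsClopen (Subtype.val ⁻¹' P : Set X)) ∧
  (∀ P ∈ parts, ∀ Q ∈ parts, P ≠ Q → Disjoint P Q) ∧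
  (⋃ P ∈ parts, P) = X

/-- `X` is `fam`-minimal: no nonempty proper subshift of `X` meets every member of `fam`. -/
def AMinimal {G A : Type} [Group G] (X : Set (G → A)) (fam : Set (Set (G → A))) : Prop :=
  ¬ ∃ Y : Set (G → A), IsSubshift G A Y ∧ Y.Nonempty ∧ Y ⊂ X ∧
    ∀ S ∈ fam, (Y ∩ S).Nonempty

/-- The free product of a subshift `V ⊆ B^G` and a subshift `W ⊆ B^H`, a subshift
of `B^(G∗H)`. -/
def freeProd {G H B : Type} [Group G] [Group H]
    (V : Set (G → B)) (W : Set (H → B)) : Set (Monoid.Coprod G H → B) :=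
  {x | ∀ g : Monoid.Coprod G H,
    (fun h : G => x (g * Monoid.Coprod.inl h)) ∈ V ∧
    (fun k : H => x (g * Monoid.Coprod.inr k)) ∈ W}

/-- Continuity of a map into a finite (discrete) alphabet. -/
def ContinuousToDiscrete {X A : Type} [TopologicalSpace X] (c : X → A) : Prop :=
  letI : TopologicalSpace A := ⊥
  Continuous c

/-- Continuity of a map into the shift space `A^G` over a discrete alphabet `A`. -/
def ContinuousIntoShift {X G A : Type} [TopologicalSpace X] (φ : X → (G → A)) : Prop :=
  letI : TopologicalSpace A := ⊥
  Continuous φ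

set_option linter.unusedSectionVars false

namespace SubshiftAux

/-! ### Leading-false count (variable-length prefix code parsing) -/

def lfc (z : Cantor) : ℕ → ℕ → ℕ
  | _, 0 => 0
  | start, cap+1 => if z start then 0 else lfc z (start+1) cap + 1

lemma lfc_le (z : Cantor) : ∀ start cap, lfc z start cap ≤ cap
  | _, 0 => le_refl _
  | start, cap+1 => by
    rw [lfc]; split
    · exact Nat.zero_le _
    · exact Nat.succ_le_succ (lfc_le z _ cap)

lemma lfc_false (z : Cantor) : ∀ start cap i, i < lfc z start cap → z (start + i) = false
  | start, 0, i, h => by simp [lfc] at h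
  | start, cap+1, i, h => by
    rw [lfc] at h
    split at h
    · omega
    · rename_i hz
      cases i with
      | zero => simpa using hz
      | succ j =>
        have e : start + (j+1) = (start+1) + j := by omega
        rw [e]
        exact lfc_false z (start+1) cap j (by omega)

lemma lfc_true (z : Cantor) : ∀ start cap, lfc z start cap < cap →
    z (start + lfc z start cap) = true
  | start, 0, h => by omega
  | start, cap+1, h => by
    rw [lfc] at h ⊢
    by_cases hz : z start
    · rw [if_pos hz]; simpa using hz
    · rw [if_neg hz] at h ⊢
      have e : start + (lfc z (start+1) cap + 1) = (start+1) + lfc z (start+1) cap := by omega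
      rw [e]
      exact lfc_true z (start+1) cap (by omega)

lemma lfc_spec (z : Cantor) : ∀ start cap m, m ≤ cap →
    (∀ i < m, z (start + i) = false) → (m < cap → z (start + m) = true) →
    lfc z start cap = m
  | start, 0, m, h1, _, _ => by simp only [lfc]; omega
  | start, cap+1, m, h1, h2, h3 => by
    rw [lfc]
    cases m with
    | zero =>
      rw [if_pos]
      simpa using h3 (by omega)
    | succ j =>
      rw [if_neg]
      · have : lfc z (start+1) cap = j := by
          apply lfc_spec z (start+1) cap j (by omega)
          · intro i hi
            have e : start + 1 + i = start + (i+1) := by omega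
            rw [e]; exact h2 (i+1) (by omega)
          · intro hj
            have e : start + 1 + j = start + (j+1) := by omega
            rw [e]; exact h3 (by omega)
        omega
      · simpa using h2 0 (by omega)

lemma lfc_congr (z z' : Cantor) : ∀ start start' cap,
    (∀ i < cap, z (start + i) = z' (start' + i)) →
    lfc z start cap = lfc z' start' cap
  | start, start', 0, _ => rfl
  | start, start', cap+1, h => by
    rw [lfc, lfc]
    have h0 : z start = z' start' := by simpa using h 0 (by omega)
    rw [h0]
    split
    · rfl
    · have : lfc z (start+1) cap = lfc z' (start'+1) cap := by
        apply lfc_congr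
        intro i hi
        have e : start + 1 + i = start + (i+1) := by omega
        have e' : start' + 1 + i = start' + (i+1) := by omega
        rw [e, e']; exact h (i+1) (by omega)
      omega

/-! ### The decoding machine -/

section Machine

variable {C : Type} [Fintype C] [LinearOrder C] (c₀ : C) (X : Set (ℕ → C))

/-- `f` restricted to `[0,n)` is a pattern of `X`. -/
def pat (n : ℕ) (f : ℕ → C) : Prop := ∃ x ∈ X, ∀ i < n, x i = f i

lemma pat_self {x : ℕ → C} (hx : x ∈ X) (n : ℕ) : pat X n x :=
  ⟨x, hx, fun _ _ => rfl⟩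

/-- The set of possible next letters after the pattern `f ↾ [0,n)`. -/
noncomputable def kidsF (n : ℕ) (f : ℕ → C) : Finset C :=
  @Finset.filter C (fun a => ∃ x ∈ X, (∀ i < n, x i = f i) ∧ x n = a)
    (Classical.decPred _) Finset.univ

lemma mem_kidsF {n : ℕ} {f : ℕ → C} {a : C} :
    a ∈ kidsF X n f ↔ ∃ x ∈ X, (∀ i < n, x i = f i) ∧ x n = a := by
  rw [kidsF]
  rw [@Finset.mem_filter C _ (Classical.decPred _) Finset.univ a]
  simp

/-- The sorted list of possible next letters. -/
noncomputable def kids (n : ℕ) (f : ℕ → C) : List C := (kidsF X n f).sort (· ≤ ·)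

lemma mem_kids {n : ℕ} {f : ℕ → C} {a : C} :
    a ∈ kids X n f ↔ ∃ x ∈ X, (∀ i < n, x i = f i) ∧ x n = a := by
  rw [kids, Finset.mem_sort, mem_kidsF]

lemma kids_nodup (n : ℕ) (f : ℕ → C) : (kids X n f).Nodup := Finset.sort_nodup _ _

lemma kidsF_congr {n : ℕ} {f g : ℕ → C} (h : ∀ i < n, f i = g i) :
    kidsF X n f = kidsF X n g := by
  ext a
  rw [mem_kidsF, mem_kidsF]
  constructor
  · rintro ⟨x, hx, h1, h2⟩
    exact ⟨x, hx, fun i hi => by rw [h1 i hi, h i hi], h2⟩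
  · rintro ⟨x, hx, h1, h2⟩
    exact ⟨x, hx, fun i hi => by rw [h1 i hi, ← h i hi], h2⟩

lemma kids_congr {n : ℕ} {f g : ℕ → C} (h : ∀ i < n, f i = g i) :
    kids X n f = kids X n g := by
  rw [kids, kids, kidsF_congr X h]

lemma kids_len_le (n : ℕ) (f : ℕ → C) : (kids X n f).length ≤ Fintype.card C := by
  rw [kids, Finset.length_sort]
  exact le_trans (Finset.card_le_univ _) (le_of_eq Finset.card_univ)

/-- One machine state: current read-position and letters decoded so far. -/
noncomputable def mach (z : Cantor) : ℕ → ℕ × (ℕ → C)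
  | 0 => (0, fun _ => c₀)
  | n+1 =>
    let st := mach z n
    let l := kids X n st.2
    let idx := lfc z (st.1 + 1) (l.length - 1)
    (st.1 + 1 + min (idx + 1) (l.length - 1),
      fun i => if i = n then l.getD idx c₀ else st.2 i)

noncomputable def mp (z : Cantor) (n : ℕ) : ℕ := (mach c₀ X z n).1
noncomputable def mf (z : Cantor) (n : ℕ) : ℕ → C := (mach c₀ X z n).2
noncomputable def ml (z : Cantor) (n : ℕ) : List C := kids X n (mf c₀ X z n)
noncomputable def midx (z : Cantor) (n : ℕ) : ℕ :=
  lfc z (mp c₀ X z n + 1) ((ml c₀ X z n).length - 1)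

lemma mp_zero (z : Cantor) : mp c₀ X z 0 = 0 := rfl

lemma mf_zero (z : Cantor) : mf c₀ X z 0 = fun _ => c₀ := rfl

lemma mp_succ (z : Cantor) (n : ℕ) :
    mp c₀ X z (n+1) = mp c₀ X z n + 1 +
      min (midx c₀ X z n + 1) ((ml c₀ X z n).length - 1) := rfl

lemma mf_succ (z : Cantor) (n : ℕ) :
    mf c₀ X z (n+1) = fun i =>
      if i = n then (ml c₀ X z n).getD (midx c₀ X z n) c₀ else mf c₀ X z n i := rfl

noncomputable def outB (z : Cantor) (n : ℕ) : Bool := z (mp c₀ X z n)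
noncomputable def outX (z : Cantor) (n : ℕ) : C := mf c₀ X z (n+1) n

lemma outX_eq (z : Cantor) (n : ℕ) :
    outX c₀ X z n = (ml c₀ X z n).getD (midx c₀ X z n) c₀ := by
  rw [outX, mf_succ]; simp

lemma mf_eq (z : Cantor) (n : ℕ) :
    mf c₀ X z n = fun i => if i < n then outX c₀ X z i else c₀ := by
  induction n with
  | zero => funext i; rw [mf_zero, if_neg (by omega)]
  | succ n ih =>
    funext i
    rw [mf_succ]
    dsimp only
    by_cases h : i = n
    · subst h
      rw [if_pos rfl, if_pos (by omega), outX_eq]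
    · rw [if_neg h, ih]
      dsimp only
      by_cases h2 : i < n
      · rw [if_pos h2, if_pos (by omega)]
      · rw [if_neg h2, if_neg (by omega)]

/-! ### Invariants -/

lemma pat_mf (hne : X.Nonempty) (z : Cantor) : ∀ n, pat X n (mf c₀ X z n) ∧
    midx c₀ X z n < (ml c₀ X z n).length := by
  have key : ∀ n, pat X n (mf c₀ X z n) → midx c₀ X z n < (ml c₀ X z n).length := by
    intro n hp
    obtain ⟨x, hx, hagr⟩ := hp
    have hmem : x n ∈ ml c₀ X z n := by
      rw [ml, mem_kids]
      exact ⟨x, hx, hagr, rfl⟩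
    have hlen : 0 < (ml c₀ X z n).length := List.length_pos_iff.mpr (List.ne_nil_of_mem hmem)
    have := lfc_le z (mp c₀ X z n + 1) ((ml c₀ X z n).length - 1)
    rw [midx]
    omega
  intro n
  induction n with
  | zero =>
    have hp : pat X 0 (mf c₀ X z 0) := ⟨hne.choose, hne.choose_spec, by omega⟩
    exact ⟨hp, key 0 hp⟩
  | succ n ih =>
    obtain ⟨hp, hlt⟩ := ih
    have hmem : (ml c₀ X z n).getD (midx c₀ X z n) c₀ ∈ ml c₀ X z n := by
      rw [List.getD_eq_getElem _ _ hlt]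
      exact List.getElem_mem _
    rw [ml, mem_kids] at hmem
    obtain ⟨x, hx, hagr, hxn⟩ := hmem
    have hp' : pat X (n+1) (mf c₀ X z (n+1)) := by
      refine ⟨x, hx, fun i hi => ?_⟩
      rw [mf_succ]
      dsimp only
      by_cases h : i = n
      · subst h; rw [if_pos rfl, hxn, ml]
      · rw [if_neg h]; exact hagr i (by omega)
    exact ⟨hp', key _ hp'⟩

lemma pat_outX (hne : X.Nonempty) (z : Cantor) (n : ℕ) :
    pat X n (fun i => outX c₀ X z i) := by
  obtain ⟨x, hx, hagr⟩ := (pat_mf c₀ X hne z n).1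
  refine ⟨x, hx, fun i hi => ?_⟩
  rw [hagr i hi, mf_eq]
  dsimp only
  rw [if_pos hi]

lemma mem_of_pat [TopologicalSpace C] [DiscreteTopology C]
    (hcl : IsClosed X) {x : ℕ → C} (h : ∀ n, pat X n x) : x ∈ X := by
  by_contra hx
  obtain ⟨I, u, hu, hsub⟩ := (isOpen_pi_iff.mp hcl.isOpen_compl) x hx
  obtain ⟨y, hy, hagr⟩ := h (I.sup id + 1)
  refine hsub (fun i hi => ?_) hy
  have : y i = x i := hagr i (by
    have : i ≤ I.sup id := Finset.le_sup (f := id) hi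
    omega)
  rw [this]
  exact (hu i hi).2

/-! ### Position bounds and locality -/

lemma mp_succ_ge (z : Cantor) (n : ℕ) : mp c₀ X z n + 1 ≤ mp c₀ X z (n+1) := by
  rw [mp_succ]; omega

lemma mp_succ_le [Nonempty C] (z : Cantor) (n : ℕ) :
    mp c₀ X z (n+1) ≤ mp c₀ X z n + Fintype.card C := by
  have hk : 0 < Fintype.card C := Fintype.card_pos
  have hl := kids_len_le X n (mf c₀ X z n)
  rw [mp_succ]
  have : min (midx c₀ X z n + 1) ((ml c₀ X z n).length - 1) ≤ (ml c₀ X z n).length - 1 :=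
    min_le_right _ _
  rw [ml] at *
  omega

lemma mp_le [Nonempty C] (z : Cantor) (n : ℕ) : mp c₀ X z n ≤ n * Fintype.card C := by
  induction n with
  | zero => simp [mp_zero]
  | succ n ih =>
    have := mp_succ_le c₀ X z n
    have : (n+1) * Fintype.card C = n * Fintype.card C + Fintype.card C := by ring
    omega

lemma mach_agree [Nonempty C] {z z' : Cantor} :
    ∀ n, (∀ i < n * Fintype.card C, z i = z' i) → mach c₀ X z n = mach c₀ X z' n := by
  intro n
  induction n with
  | zero => intro _; rfl
  | succ n ih =>
    intro hag
    have hk : 0 < Fintype.card C := Fintype.card_pos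
    have hmn : mach c₀ X z n = mach c₀ X z' n := by
      apply ih
      intro i hi
      exact hag i (by nlinarith)
    have hp : mp c₀ X z n = mp c₀ X z' n := by rw [mp, mp, hmn]
    have hf : mf c₀ X z n = mf c₀ X z' n := by rw [mf, mf, hmn]
    have hl : ml c₀ X z n = ml c₀ X z' n := by rw [ml, ml, hf]
    have hidx : midx c₀ X z n = midx c₀ X z' n := by
      rw [midx, midx, hp, hl]
      apply lfc_congr
      intro i hi
      apply hag
      have h1 := mp_le c₀ X z' n
      have h2 := kids_len_le X n (mf c₀ X z' n)
      rw [← ml] at h2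
      have h3 : (n+1) * Fintype.card C = n * Fintype.card C + Fintype.card C := by ring
      omega
    have e1 : mp c₀ X z (n+1) = mp c₀ X z' (n+1) := by
      rw [mp_succ, mp_succ, hp, hl, hidx]
    have e2 : mf c₀ X z (n+1) = mf c₀ X z' (n+1) := by
      rw [mf_succ, mf_succ, hl, hidx, hf]
    rw [show mach c₀ X z (n+1) = (mp c₀ X z (n+1), mf c₀ X z (n+1)) from rfl,
      show mach c₀ X z' (n+1) = (mp c₀ X z' (n+1), mf c₀ X z' (n+1)) from rfl, e1, e2]

lemma outB_agree [Nonempty C] {z z' : Cantor} {n : ℕ}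
    (hag : ∀ i < (n+1) * Fintype.card C, z i = z' i) : outB c₀ X z n = outB c₀ X z' n := by
  have hk : 0 < Fintype.card C := Fintype.card_pos
  have hm := mach_agree c₀ X n (z := z) (z' := z') (fun i hi => hag i (by nlinarith))
  have hp : mp c₀ X z n = mp c₀ X z' n := by rw [mp, mp, hm]
  rw [outB, outB, hp]
  apply hag
  have := mp_le c₀ X z' n
  have : (n+1) * Fintype.card C = n * Fintype.card C + Fintype.card C := by ring
  omega

lemma outX_agree [Nonempty C] {z z' : Cantor} {n : ℕ}
    (hag : ∀ i < (n+1) * Fintype.card C, z i = z' i) : outX c₀ X z n = outX c₀ X z' n := by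
  have hm := mach_agree c₀ X (n+1) (z := z) (z' := z') hag
  rw [outX, outX, mf, mf, hm]

/-! ### Injectivity -/

lemma block_exists (z : Cantor) (m : ℕ) :
    ∃ n, mp c₀ X z n ≤ m ∧ m < mp c₀ X z (n+1) := by
  induction m with
  | zero =>
    refine ⟨0, le_of_eq (mp_zero c₀ X z), ?_⟩
    have := mp_succ_ge c₀ X z 0
    rw [mp_zero] at this
    omega
  | succ m ih =>
    obtain ⟨n, h1, h2⟩ := ih
    by_cases h : m + 1 < mp c₀ X z (n+1)
    · exact ⟨n, by omega, h⟩
    · refine ⟨n+1, by omega, ?_⟩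
      have := mp_succ_ge c₀ X z (n+1)
      omega

lemma midx_eq_indexOf (hne : X.Nonempty) (z : Cantor) (n : ℕ) :
    midx c₀ X z n = (ml c₀ X z n).idxOf (outX c₀ X z n) := by
  have hlt := (pat_mf c₀ X hne z n).2
  rw [outX_eq, List.getD_eq_getElem _ _ hlt]
  exact (List.Nodup.idxOf_getElem (kids_nodup X n _) _ hlt).symm

lemma mach_ext (hne : X.Nonempty) {z z' : Cantor}
    (hB : ∀ n, outB c₀ X z n = outB c₀ X z' n)
    (hx : ∀ n, outX c₀ X z n = outX c₀ X z' n) : z = z' := by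
  -- the nodes and lists coincide
  have hf : ∀ n, mf c₀ X z n = mf c₀ X z' n := by
    intro n
    rw [mf_eq, mf_eq]
    funext i
    by_cases h : i < n
    · rw [if_pos h, if_pos h, hx]
    · rw [if_neg h, if_neg h]
  have hl : ∀ n, ml c₀ X z n = ml c₀ X z' n := by
    intro n; rw [ml, ml, hf]
  have hidx : ∀ n, midx c₀ X z n = midx c₀ X z' n := by
    intro n
    rw [midx_eq_indexOf c₀ X hne, midx_eq_indexOf c₀ X hne, hl, hx]
  have hp : ∀ n, mp c₀ X z n = mp c₀ X z' n := by
    intro n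
    induction n with
    | zero => rw [mp_zero, mp_zero]
    | succ n ih => rw [mp_succ, mp_succ, ih, hl, hidx]
  -- now all bits agree
  funext m
  obtain ⟨n, h1, h2⟩ := block_exists c₀ X z m
  by_cases hm : m = mp c₀ X z n
  · have bz : z m = outB c₀ X z n := by rw [outB, hm]
    have bz' : z' m = outB c₀ X z' n := by rw [outB, ← hp, hm]
    rw [bz, bz', hB]
  · -- m is inside the code block of step n
    rw [mp_succ] at h2
    set p := mp c₀ X z n with hpdef
    set cap := (ml c₀ X z n).length - 1 with hcap
    set idx := midx c₀ X z n with hidxdef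
    have hi : m - p - 1 < min (idx + 1) cap := by omega
    have hm' : m = p + 1 + (m - p - 1) := by omega
    have lz : lfc z (p + 1) cap = idx := rfl
    have lz' : lfc z' (mp c₀ X z' n + 1) ((ml c₀ X z' n).length - 1) = midx c₀ X z' n := rfl
    rw [← hp, ← hl, ← hidx, ← hpdef, ← hcap, ← hidxdef] at lz'
    set i := m - p - 1 with hidef
    rcases lt_trichotomy i idx with hc | hc | hc
    · have e1 : z (p + 1 + i) = false := by
        rw [← lz] at hc; exact lfc_false z (p+1) cap i hc
      have e2 : z' (p + 1 + i) = false := by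
        rw [← lz'] at hc; exact lfc_false z' (p+1) cap i hc
      rw [hm', e1, e2]
    · have hcaplt : idx < cap := by omega
      have e1 : z (p + 1 + idx) = true := by
        have := lfc_true z (p+1) cap (by rw [lz]; exact hcaplt)
        rwa [lz] at this
      have e2 : z' (p + 1 + idx) = true := by
        have := lfc_true z' (p+1) cap (by rw [lz']; exact hcaplt)
        rwa [lz'] at this
      rw [hm', hc, e1, e2]
    · omega

/-! ### Surjectivity: the encoding map -/

noncomputable def eidx (x : ℕ → C) (n : ℕ) : ℕ := (kids X n x).idxOf (x n)

noncomputable def ec (x : ℕ → C) (n : ℕ) : ℕ :=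
  min (eidx X x n + 1) ((kids X n x).length - 1)

noncomputable def epos (x : ℕ → C) : ℕ → ℕ
  | 0 => 0
  | n+1 => epos x n + 1 + ec X x n

noncomputable def enc (b : Cantor) (x : ℕ → C) : Cantor := fun m =>
  let n := Nat.findGreatest (fun n => epos X x n ≤ m) m
  if m = epos X x n then b n else decide (m - epos X x n - 1 = eidx X x n)

lemma epos_ge (x : ℕ → C) : ∀ n, n ≤ epos X x n
  | 0 => le_refl 0
  | n+1 => by
    have := epos_ge x n
    rw [epos]
    omega

lemma epos_mono (x : ℕ → C) {a b : ℕ} (h : a < b) : epos X x a < epos X x b := by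
  induction b with
  | zero => omega
  | succ b ih =>
    rw [epos]
    rcases Nat.lt_succ_iff_lt_or_eq.mp h with h' | h'
    · have := ih h'; omega
    · subst h'; omega

lemma findGreatest_block {x : ℕ → C} {m n : ℕ}
    (h1 : epos X x n ≤ m) (h2 : m < epos X x (n+1)) :
    Nat.findGreatest (fun n => epos X x n ≤ m) m = n := by
  have hge := epos_ge X x n
  have hnm : n ≤ m := le_trans hge h1
  have hle : n ≤ Nat.findGreatest (fun n => epos X x n ≤ m) m :=
    Nat.le_findGreatest hnm h1
  by_contra hne
  have hlt : n < Nat.findGreatest (fun n => epos X x n ≤ m) m := by omega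
  have hspec : epos X x (Nat.findGreatest (fun n => epos X x n ≤ m) m) ≤ m :=
    Nat.findGreatest_spec (P := fun k => epos X x k ≤ m) hnm h1
  have : epos X x (n+1) ≤ epos X x (Nat.findGreatest (fun n => epos X x n ≤ m) m) := by
    rcases Nat.lt_or_ge (n+1) (Nat.findGreatest (fun n => epos X x n ≤ m) m) with h | h
    · exact le_of_lt (epos_mono X x h)
    · have he : n+1 = Nat.findGreatest (fun n => epos X x n ≤ m) m := by omega
      rw [he]
  omega

lemma enc_spec1 (b : Cantor) (x : ℕ → C) (n : ℕ) : enc X b x (epos X x n) = b n := by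
  rw [enc]
  have hb : Nat.findGreatest (fun k => epos X x k ≤ epos X x n) (epos X x n) = n :=
    findGreatest_block X (le_refl _) (epos_mono X x (by omega))
  simp only [hb]
  simp

lemma enc_spec2 (b : Cantor) (x : ℕ → C) {n i : ℕ} (hi : i < ec X x n) :
    enc X b x (epos X x n + 1 + i) = decide (i = eidx X x n) := by
  rw [enc]
  have h2 : epos X x n + 1 + i < epos X x (n+1) := by rw [epos]; omega
  have hb : Nat.findGreatest (fun k => epos X x k ≤ epos X x n + 1 + i)
      (epos X x n + 1 + i) = n :=
    findGreatest_block X (by omega) h2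
  simp only [hb]
  rw [if_neg (by omega)]
  have he : epos X x n + 1 + i - epos X x n - 1 = i := by omega
  rw [he]

lemma mach_enc {x : ℕ → C} (hx : x ∈ X) (b : Cantor) :
    ∀ n, mach c₀ X (enc X b x) n = (epos X x n, fun i => if i < n then x i else c₀) := by
  intro n
  set z := enc X b x with hz
  induction n with
  | zero =>
    refine congrArg₂ Prod.mk rfl ?_
    funext i
    show c₀ = if i < 0 then x i else c₀
    rw [if_neg (by omega)]
  | succ n ih =>
    have hp : mp c₀ X z n = epos X x n := by rw [mp, ih]
    have hfn : mf c₀ X z n = fun i => if i < n then x i else c₀ := by rw [mf, ih]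
    have hln : ml c₀ X z n = kids X n x := by
      rw [ml, hfn]
      exact kids_congr X (fun i hi => by rw [if_pos hi])
    have hxmem : x n ∈ kids X n x := (mem_kids X).mpr ⟨x, hx, fun _ _ => rfl, rfl⟩
    have heidx : eidx X x n < (kids X n x).length := List.idxOf_lt_length_iff.mpr hxmem
    have hlen : 0 < (kids X n x).length := by omega
    have hmidx : midx c₀ X z n = eidx X x n := by
      rw [midx, hp, hln]
      apply lfc_spec
      · omega
      · intro i hilt
        have hic : i < ec X x n := by rw [ec]; omega
        rw [hz, enc_spec2 X b x hic]
        simp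
        omega
      · intro hcap
        have hic : eidx X x n < ec X x n := by rw [ec]; omega
        rw [hz, enc_spec2 X b x hic]
        simp
    have e1 : mp c₀ X z (n+1) = epos X x (n+1) := by
      rw [mp_succ, hp, hln, hmidx, epos, ec]
    have e2 : mf c₀ X z (n+1) = fun i => if i < n + 1 then x i else c₀ := by
      rw [mf_succ, hln, hmidx, hfn]
      funext i
      dsimp only
      by_cases h : i = n
      · subst h
        rw [if_pos rfl, if_pos (by omega), List.getD_eq_getElem _ _ heidx]
        exact List.getElem_idxOf heidx
      · rw [if_neg h]
        by_cases h2 : i < n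
        · rw [if_pos h2, if_pos (by omega)]
        · rw [if_neg h2, if_neg (by omega)]
    rw [show mach c₀ X z (n+1) = (mp c₀ X z (n+1), mf c₀ X z (n+1)) from rfl, e1, e2]

lemma outB_enc {x : ℕ → C} (hx : x ∈ X) (b : Cantor) (n : ℕ) :
    outB c₀ X (enc X b x) n = b n := by
  rw [outB, mp, mach_enc c₀ X hx b n]
  exact enc_spec1 X b x n

lemma outX_enc {x : ℕ → C} (hx : x ∈ X) (b : Cantor) (n : ℕ) :
    outX c₀ X (enc X b x) n = x n := by
  rw [outX, mf, mach_enc c₀ X hx b (n+1)]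
  dsimp only
  rw [if_pos (by omega)]

end Machine

/-! ### The homeomorphism `Cantor ≃ₜ Cantor × X` -/

section MainHomeo

variable {C : Type} [Fintype C] [Nonempty C] [LinearOrder C]
  [TopologicalSpace C] [DiscreteTopology C]

lemma outB_continuous (c₀ : C) (X : Set (ℕ → C)) (n : ℕ) :
    Continuous (fun z : Cantor => outB c₀ X z n) := by
  set N := (n+1) * Fintype.card C with hN
  let ext : (Fin N → Bool) → Cantor := fun w i => if h : i < N then w ⟨i, h⟩ else false
  have key : (fun z : Cantor => outB c₀ X z n) =
      (fun w => outB c₀ X (ext w) n) ∘ (fun z (j : Fin N) => z j) := by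
    funext z
    refine outB_agree c₀ X (fun i hi => ?_)
    show z i = ext (fun j : Fin N => z j) i
    rw [show ext (fun j : Fin N => z j) i = if h : i < N then z i else false from rfl,
      dif_pos hi]
  rw [key]
  exact continuous_of_discreteTopology.comp (continuous_pi fun j => continuous_apply _)

lemma outX_continuous (c₀ : C) (X : Set (ℕ → C)) (n : ℕ) :
    Continuous (fun z : Cantor => outX c₀ X z n) := by
  set N := (n+1) * Fintype.card C with hN
  let ext : (Fin N → Bool) → Cantor := fun w i => if h : i < N then w ⟨i, h⟩ else false
  have key : (fun z : Cantor => outX c₀ X z n) =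
      (fun w => outX c₀ X (ext w) n) ∘ (fun z (j : Fin N) => z j) := by
    funext z
    refine outX_agree c₀ X (fun i hi => ?_)
    show z i = ext (fun j : Fin N => z j) i
    rw [show ext (fun j : Fin N => z j) i = if h : i < N then z i else false from rfl,
      dif_pos hi]
  rw [key]
  exact continuous_of_discreteTopology.comp (continuous_pi fun j => continuous_apply _)

theorem exists_homeo (X : Set (ℕ → C)) (hcl : IsClosed X) (hne : X.Nonempty) :
    Nonempty (Cantor ≃ₜ (Cantor × X)) := by
  classical
  obtain ⟨c₀⟩ := (inferInstance : Nonempty C)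
  have hmem : ∀ z : Cantor, (fun n => outX c₀ X z n) ∈ X :=
    fun z => mem_of_pat X hcl (fun n => pat_outX c₀ X hne z n)
  let D : Cantor → Cantor × X :=
    fun z => (fun n => outB c₀ X z n, ⟨fun n => outX c₀ X z n, hmem z⟩)
  have hinj : Function.Injective D := by
    intro z z' h
    have h1 := congrArg Prod.fst h
    have h2 := congrArg (fun p : Cantor × X => (p.2 : ℕ → C)) h
    exact mach_ext c₀ X hne (fun n => congrFun h1 n) (fun n => congrFun h2 n)
  have hsurj : Function.Surjective D := by
    rintro ⟨b, ⟨x, hx⟩⟩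
    refine ⟨enc X b x, ?_⟩
    refine congrArg₂ Prod.mk ?_ ?_
    · funext n; exact outB_enc c₀ X hx b n
    · apply Subtype.ext; funext n; exact outX_enc c₀ X hx b n
  have hcont : Continuous D := by
    apply Continuous.prodMk
    · exact continuous_pi fun n => outB_continuous c₀ X n
    · exact Continuous.subtype_mk (continuous_pi fun n => outX_continuous c₀ X n) _
  exact ⟨Continuous.homeoOfEquivCompactToT2
    (f := Equiv.ofBijective D ⟨hinj, hsurj⟩) hcont⟩

end MainHomeo

/-! ### Transfer to subshift spaces `G → A` -/

theorem exists_homeo_subshift (G A : Type) [Countable G] [Fintype A] [Nonempty A]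
    [TopologicalSpace A] [DiscreteTopology A]
    (X : Set (G → A)) (hcl : IsClosed X) (hne : X.Nonempty) :
    Nonempty (Cantor ≃ₜ (Cantor × X)) := by
  classical
  obtain ⟨e, he⟩ := Countable.exists_injective_nat G
  letI : TopologicalSpace (Option A) := ⊥
  haveI : DiscreteTopology (Option A) := ⟨rfl⟩
  letI : LinearOrder (Option A) := LinearOrder.lift' (Fintype.equivFin (Option A)) (Equiv.injective _)
  set ι : (G → A) → (ℕ → Option A) := fun f n =>
    if h : ∃ g, e g = n then some (f h.choose) else none with hι
  have hι_inj : Function.Injective ι := by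
    intro f f' h
    funext g
    have hc := congrFun h (e g)
    have hex : ∃ g', e g' = e g := ⟨g, rfl⟩
    rw [hι] at hc
    dsimp only at hc
    rw [dif_pos hex, dif_pos hex] at hc
    have hg : hex.choose = g := he hex.choose_spec
    rw [hg] at hc
    exact Option.some_injective _ hc
  have hι_cont : Continuous ι := by
    apply continuous_pi
    intro n
    by_cases h : ∃ g, e g = n
    · have hfe : (fun f : G → A => ι f n) = fun f => some (f h.choose) :=
        funext fun f => by rw [hι]; exact dif_pos h
      rw [hfe]
      exact continuous_of_discreteTopology.comp (continuous_apply _)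
    · have hfe : (fun f : G → A => ι f n) = fun _ => none :=
        funext fun f => by rw [hι]; exact dif_neg h
      rw [hfe]
      exact continuous_const
  have hcompX : IsCompact X := hcl.isCompact
  have hcl' : IsClosed (ι '' X) := (hcompX.image hι_cont).isClosed
  have hne' : (ι '' X).Nonempty := hne.image ι
  obtain ⟨Φ'⟩ := exists_homeo (ι '' X) hcl' hne'
  -- the homeomorphism `X ≃ₜ ι '' X`
  haveI : CompactSpace X := isCompact_iff_compactSpace.mp hcompX
  let m : X → (ι '' X) := fun x => ⟨ι x, Set.mem_image_of_mem ι x.2⟩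
  have hm_bij : Function.Bijective m := by
    constructor
    · intro x x' hxx
      apply Subtype.ext
      exact hι_inj (congrArg Subtype.val hxx)
    · rintro ⟨_, x, hx, rfl⟩
      exact ⟨⟨x, hx⟩, rfl⟩
  have hm_cont : Continuous m :=
    Continuous.subtype_mk (hι_cont.comp continuous_subtype_val) _
  let e2 : X ≃ₜ (ι '' X) := Continuous.homeoOfEquivCompactToT2
    (f := Equiv.ofBijective m hm_bij) hm_cont
  exact ⟨Φ'.trans ((Homeomorph.refl Cantor).prodCongr e2.symm)⟩

end SubshiftAux

/-- Every subshift containing every letter at the identity is the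
symbolic image of some continuous action of `G` on the Cantor space, via a map of the
form `Q(z)(g) = c(α(g⁻¹)z)` with `c` continuous. -/
theorem subshift_is_image_of_cantor_action (G : Type) [Group G] [Countable G]
    (A : Type) [Fintype A] [Nontrivial A]
    (X : Set (G → A)) (hX : IsSubshift G A X)
    (hfull : ∀ a : A, ∃ x ∈ X, x 1 = a) :
    ∃ (α : ActSpace G) (c : Cantor → A),
      ContinuousToDiscrete c ∧
      (∀ (h : G) (z : Cantor),
        (fun g : G => c ((α.1 g⁻¹) ((α.1 h) z))) =
          shift h (fun g : G => c ((α.1 g⁻¹) z))) ∧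
      Set.range (fun (z : Cantor) (g : G) => c ((α.1 g⁻¹) z)) = X := by
  classical
  letI : TopologicalSpace A := ⊥
  haveI : DiscreteTopology A := ⟨rfl⟩
  have hne : X.Nonempty := by
    obtain ⟨a⟩ := (inferInstance : Nonempty A)
    obtain ⟨x, hx, -⟩ := hfull a
    exact ⟨x, hx⟩
  have hcl : IsClosed X := hX.1
  obtain ⟨Φ⟩ := SubshiftAux.exists_homeo_subshift G A X hcl hne
  -- basic facts about the shift
  have shift_cont : ∀ g : G, Continuous (shift g : (G → A) → (G → A)) :=
    fun g => continuous_pi fun h => continuous_apply _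
  have shift_shift : ∀ g h : G, ∀ x : G → A, shift g (shift h x) = shift (g * h) x := by
    intro g h x
    funext k
    simp [shift, mul_inv_rev, mul_assoc]
  have shift_one : ∀ x : G → A, shift (1 : G) x = x := by
    intro x; funext k; simp [shift]
  -- the shift homeomorphisms of X
  let σ : G → (X ≃ₜ X) := fun g =>
    { toFun := fun x => ⟨shift g x.1, hX.2 g x.1 x.2⟩
      invFun := fun x => ⟨shift g⁻¹ x.1, hX.2 g⁻¹ x.1 x.2⟩
      left_inv := fun x => Subtype.ext (by
        show shift g⁻¹ (shift g x.1) = x.1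
        rw [shift_shift, inv_mul_cancel, shift_one])
      right_inv := fun x => Subtype.ext (by
        show shift g (shift g⁻¹ x.1) = x.1
        rw [shift_shift, mul_inv_cancel, shift_one])
      continuous_toFun :=
        Continuous.subtype_mk ((shift_cont g).comp continuous_subtype_val) _
      continuous_invFun :=
        Continuous.subtype_mk ((shift_cont g⁻¹).comp continuous_subtype_val) _ }
  have σval : ∀ (g : G) (x : X), ((σ g x : X) : G → A) = shift g (x : G → A) :=
    fun g x => rfl
  have σcomp : ∀ (g h : G) (x : X), σ g (σ h x) = σ (g * h) x := by
    intro g h x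
    apply Subtype.ext
    rw [σval, σval, σval, shift_shift]
  have σone : ∀ x : X, σ 1 x = x := by
    intro x
    apply Subtype.ext
    rw [σval, shift_one]
  -- the conjugated action on the Cantor space
  let β : G → (Cantor ≃ₜ Cantor) := fun g =>
    (Φ.trans ((Homeomorph.refl Cantor).prodCongr (σ g))).trans Φ.symm
  have βdef : ∀ (g : G) (z : Cantor), β g z = Φ.symm ((Φ z).1, σ g (Φ z).2) :=
    fun g z => rfl
  have βcomp : ∀ (g h : G) (z : Cantor), β g (β h z) = β (g * h) z := by
    intro g h z
    rw [βdef, βdef, βdef, Φ.apply_symm_apply]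
    dsimp only
    rw [σcomp]
  have βone : ∀ z : Cantor, β 1 z = z := by
    intro z
    rw [βdef, σone]
    exact Φ.symm_apply_apply z
  have hact : IsAction G (fun g => ContinuousMap.mk (β g) (β g).continuous) := by
    constructor
    · exact ContinuousMap.ext fun z => βone z
    · intro g h
      exact ContinuousMap.ext fun z => (βcomp g h z).symm
  let α : ActSpace G := ⟨fun g => ContinuousMap.mk (β g) (β g).continuous, hact⟩
  let c : Cantor → A := fun z => ((Φ z).2 : G → A) 1
  have key : ∀ (k : G) (z : Cantor), c (β k z) = ((Φ z).2 : G → A) k⁻¹ := by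
    intro k z
    show ((Φ (β k z)).2 : G → A) 1 = _
    rw [βdef, Φ.apply_symm_apply]
    show shift k ((Φ z).2 : G → A) 1 = _
    rw [shift]
    rw [mul_one]
  refine ⟨α, c, ?_, ?_, ?_⟩
  · exact (continuous_apply (1 : G)).comp
      (continuous_subtype_val.comp (continuous_snd.comp Φ.continuous))
  · intro h z
    funext g
    show c (β g⁻¹ (β h z)) = c (β (h⁻¹ * g)⁻¹ z)
    rw [βcomp, key, key]
    simp [mul_inv_rev]
  · have hQ : (fun (z : Cantor) (g : G) => c ((α.1 g⁻¹) z)) =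
        fun z => ((Φ z).2 : G → A) := by
      funext z g
      show c (β g⁻¹ z) = _
      rw [key, inv_inv]
    rw [hQ]
    apply Set.eq_of_subset_of_subset
    · rintro x ⟨z, rfl⟩
      exact (Φ z).2.2
    · intro x hx
      refine ⟨Φ.symm ((fun _ => false), ⟨x, hx⟩), ?_⟩
      show ((Φ (Φ.symm ((fun _ => false), ⟨x, hx⟩))).2 : G → A) = x
      rw [Φ.apply_symm_apply]
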